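/- Let (X,ρ) be a metric space, let (A_k) be a sequence in CL(X) and let A ∈ CL(X). Then the following statements are equivalent: (i) (A_k) is Wijsman convergent to A; (ii) [WS^f]-lim A_k = A holds for every unbounded modulus f; (iii) [WS^f]-lim A_k = A holds for every unbounded, concave, slowly varying modulus f. -/

import Mathlib

open Filter Metric Set
open scoped Classical

/-- A modulus: `f : [0,∞) → [0,∞)` with `f x = 0 ↔ x = 0`, subadditive,
increasing, and continuous (all on `[0,∞)`). -/
def IsModulus (f : ℝ → ℝ) : Prop :=
  (∀ x : ℝ, 0 ≤ x → 0 ≤ f x) ∧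
  (∀ x : ℝ, 0 ≤ x → (f x = 0 ↔ x = 0)) ∧
  (∀ x y : ℝ, 0 ≤ x → 0 ≤ y → f (x + y) ≤ f x + f y) ∧
  MonotoneOn f (Set.Ici 0) ∧
  ContinuousOn f (Set.Ici 0)

/-- `f` is unbounded on `[0,∞)`. -/
def IsUnboundedOn (f : ℝ → ℝ) : Prop := ∀ M : ℝ, ∃ x : ℝ, 0 ≤ x ∧ M < f x

/-- The number of elements `k ≤ n` with `k ∈ K`. -/
noncomputable def countLe (K : Set ℕ) (n : ℕ) : ℕ := Nat.card {k : ℕ | k ≤ n ∧ k ∈ K}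

/-- `K ⊆ ℕ` has `f`-density `d`: `lim_n f(|{k ≤ n : k ∈ K}|)/f(n) = d`. -/
def HasFDensity (f : ℝ → ℝ) (K : Set ℕ) (d : ℝ) : Prop :=
  Tendsto (fun n : ℕ => f (countLe K n : ℝ) / f (n : ℝ)) atTop (nhds d)

/-- `K ⊆ ℕ` has natural density `d`: `lim_n |{k ≤ n : k ∈ K}|/n = d`. -/
def HasNatDensity (K : Set ℕ) (d : ℝ) : Prop :=
  Tendsto (fun n : ℕ => (countLe K n : ℝ) / (n : ℝ)) atTop (nhds d)

/-- Wijsman convergence: `d(x, A_k) → d(x, A)` for every `x`. -/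
def WijsmanConvTo {X : Type*} [MetricSpace X] (Aseq : ℕ → Set X) (A : Set X) : Prop :=
  ∀ x : X, Tendsto (fun k : ℕ => infDist x (Aseq k)) atTop (nhds (infDist x A))

/-- Wijsman statistical convergence (with respect to the natural density). -/
def WijsmanStatConvTo {X : Type*} [MetricSpace X] (Aseq : ℕ → Set X) (A : Set X) : Prop :=
  ∀ x : X, ∀ ε : ℝ, 0 < ε →
    HasNatDensity {k : ℕ | ε ≤ |infDist x (Aseq k) - infDist x A|} 0

/-- `f`-Wijsman statistical convergence: `[WS^f]-lim A_k = A`. -/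
def FWijsmanStatConvTo (f : ℝ → ℝ) {X : Type*} [MetricSpace X]
    (Aseq : ℕ → Set X) (A : Set X) : Prop :=
  ∀ x : X, ∀ ε : ℝ, 0 < ε →
    HasFDensity f {k : ℕ | ε ≤ |infDist x (Aseq k) - infDist x A|} 0

/-- Wijsman boundedness: `sup_k d(x, A_k) < ∞` for every `x`. -/
def WijsmanBounded {X : Type*} [MetricSpace X] (Aseq : ℕ → Set X) : Prop :=
  ∀ x : X, ∃ M : ℝ, ∀ k : ℕ, infDist x (Aseq k) ≤ M

/-- Wijsman Cesàro summability to `A`. -/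
def WijsmanCesaroTo {X : Type*} [MetricSpace X] (Aseq : ℕ → Set X) (A : Set X) : Prop :=
  ∀ x : X, Tendsto (fun n : ℕ => (∑ k ∈ Finset.range n, infDist x (Aseq k)) / (n : ℝ))
    atTop (nhds (infDist x A))

/-- Wijsman strong Cesàro summability to `A` with respect to a modulus `f`:
`[Ww^f]-lim A_k = A`. -/
def WijsmanStrongCesaroTo (f : ℝ → ℝ) {X : Type*} [MetricSpace X]
    (Aseq : ℕ → Set X) (A : Set X) : Prop :=
  ∀ x : X, Tendsto
    (fun n : ℕ => (∑ k ∈ Finset.range n, f |infDist x (Aseq k) - infDist x A|) / (n : ℝ))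
    atTop (nhds 0)

/-- A slowly varying modulus: `lim_{x→∞} f(ax)/f(x) = 1` for every `a > 0`. -/
def SlowlyVaryingOn (f : ℝ → ℝ) : Prop :=
  ∀ a : ℝ, 0 < a → Tendsto (fun x : ℝ => f (a * x) / f x) atTop (nhds 1)

lemma countLe_eq_ncard (K : Set ℕ) (n : ℕ) :
    countLe K n = ({k : ℕ | k ≤ n ∧ k ∈ K}).ncard := by
  rw [countLe, Nat.card_coe_set_eq]

lemma setOf_finite (K : Set ℕ) (n : ℕ) : ({k : ℕ | k ≤ n ∧ k ∈ K}).Finite :=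
  (Set.finite_Iic n).subset (fun _ hk => hk.1)

lemma countLe_mono (K : Set ℕ) {n m : ℕ} (h : n ≤ m) : countLe K n ≤ countLe K m := by
  rw [countLe_eq_ncard, countLe_eq_ncard]
  exact Set.ncard_le_ncard (fun k hk => ⟨hk.1.trans h, hk.2⟩) (setOf_finite K m)

lemma countLe_le_of_subset {K : Set ℕ} {N : ℕ} (h : ∀ k ∈ K, k < N) (n : ℕ) :
    countLe K n ≤ N := by
  rw [countLe_eq_ncard]
  calc ({k : ℕ | k ≤ n ∧ k ∈ K}).ncard ≤ (Set.Iio N).ncard :=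
        Set.ncard_le_ncard (fun k hk => h k hk.2) (Set.finite_Iio N)
    _ = N := by
        rw [show (Set.Iio N) = ((Finset.Iio N : Finset ℕ) : Set ℕ) by simp,
          Set.ncard_coe_finset]
        simp

lemma exists_countLe_ge {K : Set ℕ} (hK : K.Infinite) (n : ℕ) :
    ∃ N : ℕ, n ≤ countLe K N := by
  obtain ⟨S, hSK, hScard⟩ := hK.exists_subset_card_eq n
  obtain ⟨N, hN⟩ := S.exists_le
  refine ⟨N, ?_⟩
  rw [countLe_eq_ncard]
  calc n = (S : Set ℕ).ncard := by simp [hScard]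
    _ ≤ ({k : ℕ | k ≤ N ∧ k ∈ K}).ncard :=
        Set.ncard_le_ncard (fun k hk => ⟨hN k hk, hSK hk⟩) (setOf_finite K N)

lemma modulus_tendsto_atTop {f : ℝ → ℝ} (hf : IsModulus f) (hu : IsUnboundedOn f) :
    Tendsto (fun n : ℕ => f (n : ℝ)) atTop atTop := by
  rw [Filter.tendsto_atTop]
  intro M
  obtain ⟨x, hx0, hx⟩ := hu M
  filter_upwards [eventually_ge_atTop ⌈x⌉₊] with n hn
  exact hx.le.trans (hf.2.2.2.1 (mem_Ici.mpr hx0)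
    (mem_Ici.mpr (by positivity)) (le_trans (Nat.le_ceil x) (by exact_mod_cast hn)))

/-- If the exceptional set is finite (contained in `Iio N`), it has f-density 0. -/
lemma hasFDensity_zero_of_finite {f : ℝ → ℝ} (hf : IsModulus f) (hu : IsUnboundedOn f)
    {K : Set ℕ} {N : ℕ} (h : ∀ k ∈ K, k < N) : HasFDensity f K 0 := by
  have hfn := modulus_tendsto_atTop hf hu
  have hup : Tendsto (fun n : ℕ => f (N : ℝ) / f (n : ℝ)) atTop (nhds 0) :=
    Tendsto.div_atTop tendsto_const_nhds hfn
  apply tendsto_of_tendsto_of_tendsto_of_le_of_le' tendsto_const_nhds hup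
  · filter_upwards [hfn.eventually_gt_atTop 0] with n hn
    exact div_nonneg (hf.1 _ (by positivity)) (le_of_lt hn)
  · filter_upwards [hfn.eventually_gt_atTop 0] with n hn
    gcongr
    exact hf.2.2.2.1 (mem_Ici.mpr (by positivity)) (mem_Ici.mpr (by positivity))
        (by exact_mod_cast countLe_le_of_subset h n)


noncomputable section ModConstruction

variable (t : ℕ → ℕ)

/-- gap of the breakpoint sequence, as a real. -/
def tgap (j : ℕ) : ℝ := (t (j+1) : ℝ) - t j

/-- supporting affine functions -/
def ell (j : ℕ) (x : ℝ) : ℝ := (j : ℝ) + (x - t j) / tgap t j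

/-- the modulus -/
def Fmod (x : ℝ) : ℝ := ⨅ j : ℕ, ell t j x

variable {t} (H1 : ∀ m, (m+2) * t m + 1 ≤ t (m+1))

section
include H1

lemma tgap_ge : ∀ j, (t j : ℝ) + 1 ≤ tgap t j := by
  intro j
  have h := H1 j
  have : ((j+2) * t j + 1 : ℕ) ≤ (t (j+1) : ℕ) := h
  have h2 : ((j:ℝ)+2) * t j + 1 ≤ (t (j+1) : ℝ) := by exact_mod_cast this
  have : (t j : ℝ) ≥ 0 := Nat.cast_nonneg _
  unfold tgap; nlinarith

lemma tgap_pos (j : ℕ) : 0 < tgap t j := by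
  have := tgap_ge H1 j
  have : (t j : ℝ) ≥ 0 := Nat.cast_nonneg _
  linarith [tgap_ge H1 j]

lemma one_le_tgap (j : ℕ) : 1 ≤ tgap t j := by
  have := tgap_ge H1 j
  have h : (t j : ℝ) ≥ 0 := Nat.cast_nonneg _
  linarith

lemma tgap_succ (j : ℕ) : tgap t j ≤ tgap t (j+1) := by
  have h := H1 (j+1)
  have h2 : ((j:ℝ)+1+2) * t (j+1) + 1 ≤ (t (j+2) : ℝ) := by exact_mod_cast h
  have h3 : (t (j+1) : ℝ) ≥ 0 := Nat.cast_nonneg _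
  have h4 : (t j : ℝ) ≥ 0 := Nat.cast_nonneg _
  unfold tgap; nlinarith

lemma tgap_mono : Monotone (tgap t) :=
  monotone_nat_of_le_succ (tgap_succ H1)

lemma t_lt_succ (j : ℕ) : t j < t (j+1) := by
  have h := H1 j
  have h2 : t j ≤ (j+2) * t j := Nat.le_mul_of_pos_left _ (by omega)
  omega

lemma t_strictMono : StrictMono t := strictMono_nat_of_lt_succ (t_lt_succ H1)

lemma t_ge (m : ℕ) : m ≤ t m := by
  induction m with
  | zero => omega
  | succ m ih =>
      have h := H1 m
      have h2 : t m ≤ (m+2) * t m := Nat.le_mul_of_pos_left _ (by omega)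
      omega

-- (a): for j ≤ m, (m - j) * gap j ≤ T m - T j
lemma lower_gap : ∀ (j m : ℕ), j ≤ m → ((m:ℝ) - j) * tgap t j ≤ (t m : ℝ) - t j := by
  intro j m hjm
  induction m, hjm using Nat.le_induction with
  | base => simp
  | succ m hjm ih =>
      have h1 : tgap t j ≤ tgap t m := tgap_mono H1 hjm
      have h2 : (t (m+1) : ℝ) - t m = tgap t m := by unfold tgap; ring
      push_cast
      push_cast at ih
      nlinarith

-- (b): for m ≤ j, T j - T m ≤ (j - m) * gap j
lemma upper_gap : ∀ (m j : ℕ), m ≤ j → (t j : ℝ) - t m ≤ ((j:ℝ) - m) * tgap t j := by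
  intro m j hmj
  induction j, hmj using Nat.le_induction with
  | base => simp
  | succ j hmj ih =>
      have h1 : tgap t j ≤ tgap t (j+1) := tgap_succ H1 j
      have h2 : (t (j+1) : ℝ) - t j = tgap t j := by unfold tgap; ring
      have h3 : 0 < tgap t (j+1) := tgap_pos H1 _
      have h4 : ((j:ℝ) - m) ≥ 0 := by
        have : (m:ℝ) ≤ j := by exact_mod_cast hmj
        linarith
      push_cast
      push_cast at ih
      nlinarith

/-- key bound: every supporting line at `t m` is at least `m`. -/
lemma ell_t_ge (j m : ℕ) : (m : ℝ) ≤ ell t j (t m) := by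
  have hg := tgap_pos H1 j
  rcases le_total j m with h | h
  · have := lower_gap H1 j m h
    have hd : ((m:ℝ) - j) ≤ ((t m : ℝ) - t j) / tgap t j := by
      rw [le_div_iff₀ hg]; linarith
    unfold ell; linarith
  · have := upper_gap H1 m j h
    have hd : -(((j:ℝ) - m)) ≤ ((t m : ℝ) - t j) / tgap t j := by
      rw [le_div_iff₀ hg]; nlinarith
    unfold ell; linarith

lemma ell_lower (j : ℕ) (x : ℝ) : (j : ℝ) - |x| - 1 ≤ ell t j x := by
  have hg := tgap_pos H1 j
  have h1 : 1 ≤ tgap t j := one_le_tgap H1 j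
  have htj : (t j : ℝ) ≤ tgap t j - 1 := by linarith [tgap_ge H1 j]
  have hx : x - t j ≥ -|x| - (tgap t j - 1) := by
    have := neg_abs_le x; linarith
  have : (x - (t j : ℝ)) / tgap t j ≥ (-|x| - (tgap t j - 1)) / tgap t j := by gcongr
  have h2 : (-|x| - (tgap t j - 1)) / tgap t j ≥ -|x| - 1 := by
    rw [ge_iff_le, le_div_iff₀ hg]
    have h3 : 0 ≤ |x| := abs_nonneg x
    nlinarith
  unfold ell; linarith

lemma bddBelow_ell (x : ℝ) : BddBelow (Set.range fun j => ell t j x) := by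
  refine ⟨-|x| - 1, ?_⟩
  rintro y ⟨j, rfl⟩
  have := ell_lower H1 j x
  have : (0:ℝ) ≤ j := Nat.cast_nonneg _
  linarith [ell_lower H1 j x]

lemma Fmod_le (j : ℕ) (x : ℝ) : Fmod t x ≤ ell t j x := ciInf_le (bddBelow_ell H1 x) j

lemma le_Fmod {x : ℝ} {c : ℝ} (h : ∀ j, c ≤ ell t j x) : c ≤ Fmod t x := le_ciInf h

/-- value at breakpoints -/
lemma Fmod_t (m : ℕ) : Fmod t (t m) = m := by
  apply le_antisymm
  · have := Fmod_le H1 m (t m)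
    unfold ell at this; simpa using this
  · exact le_Fmod H1 (ell_t_ge H1 · m)

lemma Fmod_mono : Monotone (Fmod t) := by
  intro x y hxy
  apply le_Fmod H1
  intro j
  refine (Fmod_le H1 j x).trans ?_
  unfold ell
  have hg := tgap_pos H1 j
  gcongr

lemma Fmod_lipschitz : LipschitzWith 1 (Fmod t) := by
  have key : ∀ x y : ℝ, Fmod t x ≤ Fmod t y + |x - y| := by
    intro x y
    have : ∀ j, Fmod t x ≤ ell t j y + |x - y| := by
      intro j
      refine (Fmod_le H1 j x).trans ?_
      unfold ell
      have hg := tgap_pos H1 j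
      have h1 : 1 ≤ tgap t j := one_le_tgap H1 j
      have key : (x - t j) / tgap t j ≤ (y - t j) / tgap t j + |x - y| := by
        have e : (x - (t j:ℝ)) / tgap t j - (y - t j) / tgap t j = (x - y) / tgap t j := by
          field_simp
          ring
        have h2 : (x - y) / tgap t j ≤ |x - y| / tgap t j := by
          gcongr; exact le_abs_self _
        have h3 : |x - y| / tgap t j ≤ |x - y| := div_le_self (abs_nonneg _) h1
        linarith
      linarith
    have h2 : Fmod t x - |x - y| ≤ Fmod t y := by
      apply le_Fmod H1
      intro j
      linarith [this j]
    linarith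
  rw [lipschitzWith_iff_dist_le_mul]
  intro x y
  simp only [Real.dist_eq, NNReal.coe_one, one_mul]
  rw [abs_sub_le_iff]
  constructor
  · linarith [key x y, le_abs_self (x - y), abs_sub_comm x y]
  · linarith [key y x, le_abs_self (y - x), abs_sub_comm x y]

lemma Fmod_concave : ConcaveOn ℝ (Set.Ici (0:ℝ)) (Fmod t) := by
  refine ⟨convex_Ici 0, ?_⟩
  intro x _ y _ p q hp hq hpq
  apply le_Fmod H1
  intro j
  have hx := Fmod_le H1 j x
  have hy := Fmod_le H1 j y
  have hg := tgap_pos H1 j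
  have e : p * ell t j x + q * ell t j y - ell t j (p • x + q • y)
      = (p + q - 1) * ((j:ℝ) - (t j) / tgap t j) := by
    unfold ell
    simp only [smul_eq_mul]
    field_simp
    ring
  rw [hpq] at e
  simp only [sub_self, zero_mul] at e
  simp only [smul_eq_mul] at e ⊢
  have h4 := mul_le_mul_of_nonneg_left hx hp
  have h5 := mul_le_mul_of_nonneg_left hy hq
  linarith

lemma Fmod_zero (H0 : t 0 = 0) : Fmod t 0 = 0 := by
  have h := Fmod_t H1 0
  rw [H0] at h
  simpa using h

lemma Fmod_nonneg (H0 : t 0 = 0) {x : ℝ} (hx : 0 ≤ x) : 0 ≤ Fmod t x := by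
  rw [← Fmod_zero H1 H0]
  exact Fmod_mono H1 hx

lemma Fmod_pos (H0 : t 0 = 0) {x : ℝ} (hx : 0 < x) : 0 < Fmod t x := by
  have hT1pos : (0:ℝ) < t 1 := by
    have := t_ge H1 1
    exact_mod_cast Nat.lt_of_lt_of_le Nat.zero_lt_one this
  rcases le_total ((t 1 : ℝ)) x with h | h
  · have hmono := Fmod_mono H1 h
    rw [Fmod_t H1 1] at hmono
    push_cast at hmono
    linarith
  · have key : x / (t 1 : ℝ) ≤ Fmod t x := by
      apply le_Fmod H1
      intro j
      have hg := tgap_pos H1 j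
      have e : ell t j x = ell t j (t 1) - ((t 1:ℝ) - x) / tgap t j := by
        unfold ell; ring
      have h1 : (1:ℝ) ≤ ell t j (t 1) := by exact_mod_cast ell_t_ge H1 j 1
      have hgap0 : tgap t 0 = (t 1 : ℝ) := by
        unfold tgap; rw [H0]; simp
      have hgge : (t 1 : ℝ) ≤ tgap t j := by
        rw [← hgap0]; exact tgap_mono H1 (Nat.zero_le j)
      have h2 : ((t 1:ℝ) - x) / tgap t j ≤ ((t 1:ℝ) - x) / (t 1 : ℝ) := by
        gcongr
      have h3 : (1:ℝ) - ((t 1:ℝ) - x) / (t 1 : ℝ) = x / (t 1:ℝ) := by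
        field_simp
        ring
      rw [e]
      linarith
    have : 0 < x / (t 1 : ℝ) := div_pos hx hT1pos
    linarith

lemma Fmod_subadd (H0 : t 0 = 0) {x y : ℝ} (hx : 0 ≤ x) (hy : 0 ≤ y) :
    Fmod t (x + y) ≤ Fmod t x + Fmod t y := by
  rcases eq_or_lt_of_le (add_nonneg hx hy) with hs | hs
  · have hx0 : x = 0 := by linarith
    have hy0 : y = 0 := by linarith
    simp [hx0, hy0, Fmod_zero H1 H0, le_refl]
  · set s := x + y with hsdef
    have hconc := Fmod_concave H1
    have hxs : Fmod t x ≥ (x / s) * Fmod t s := by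
      have := hconc.2 (Set.mem_Ici.mpr (le_of_lt hs)) (Set.mem_Ici.mpr (le_refl (0:ℝ)))
        (div_nonneg hx (le_of_lt hs)) (div_nonneg hy (le_of_lt hs))
        (by field_simp; linarith)
      have e : (x / s) • s + (y / s) • (0:ℝ) = x := by
        simp only [smul_eq_mul, mul_zero, add_zero]
        field_simp
      rw [e] at this
      simpa [smul_eq_mul, Fmod_zero H1 H0] using this
    have hys : Fmod t y ≥ (y / s) * Fmod t s := by
      have := hconc.2 (Set.mem_Ici.mpr (le_of_lt hs)) (Set.mem_Ici.mpr (le_refl (0:ℝ)))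
        (div_nonneg hy (le_of_lt hs)) (div_nonneg hx (le_of_lt hs))
        (by field_simp; linarith)
      have e : (y / s) • s + (x / s) • (0:ℝ) = y := by
        simp only [smul_eq_mul, mul_zero, add_zero]
        field_simp
      rw [e] at this
      simpa [smul_eq_mul, Fmod_zero H1 H0] using this
    have hdiv : (x / s) + (y / s) = 1 := by field_simp; linarith
    have hsum : (x / s) * Fmod t s + (y / s) * Fmod t s = Fmod t s := by
      rw [← add_mul, hdiv, one_mul]
    linarith

lemma Fmod_isModulus (H0 : t 0 = 0) : IsModulus (Fmod t) := by
  refine ⟨fun x hx => Fmod_nonneg H1 H0 hx, fun x hx => ?_,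
    fun x y hx hy => Fmod_subadd H1 H0 hx hy,
    (Fmod_mono H1).monotoneOn _,
    (Fmod_lipschitz H1).continuous.continuousOn⟩
  constructor
  · intro h
    by_contra hne
    have hxpos : 0 < x := lt_of_le_of_ne hx (Ne.symm hne)
    exact absurd h (ne_of_gt (Fmod_pos H1 H0 hxpos))
  · rintro rfl
    exact Fmod_zero H1 H0

lemma Fmod_unbounded : IsUnboundedOn (Fmod t) := by
  intro M
  set m := ⌈M⌉₊ + 1
  refine ⟨(t m : ℝ), Nat.cast_nonneg _, ?_⟩
  rw [Fmod_t H1 m]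
  calc M ≤ ⌈M⌉₊ := Nat.le_ceil M
    _ < (m : ℝ) := by exact_mod_cast Nat.lt_succ_self _

lemma exists_index (H0 : t 0 = 0) {x : ℝ} (hx : 0 ≤ x) :
    ∃ m, (t m : ℝ) ≤ x ∧ x < t (m+1) := by
  set P : ℕ → Prop := fun m => (t m : ℝ) ≤ x with hPdef
  set n := ⌈x⌉₊ + 1 with hn
  set m := Nat.findGreatest P n with hm
  have hP0 : P 0 := by show (t 0 : ℝ) ≤ x; rw [H0]; simpa using hx
  have hPm : P m := Nat.findGreatest_spec (Nat.zero_le n) hP0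
  have hxn : x < (n : ℝ) := by
    have := Nat.le_ceil x
    push_cast [hn]
    linarith
  have hmn : m < n := by
    by_contra hge
    have hmeq : m = n := le_antisymm (Nat.findGreatest_le n) (not_lt.mp hge)
    have h2 : (t n : ℝ) ≤ x := by rw [← hmeq]; exact hPm
    have h1 : (n : ℝ) ≤ t n := by exact_mod_cast t_ge H1 n
    linarith
  refine ⟨m, hPm, ?_⟩
  have := Nat.findGreatest_is_greatest (P := P) (n := n)
    (Nat.lt_succ_self m) (Nat.succ_le_of_lt hmn)
  simpa [hPdef, not_le] using this

lemma Fmod_slowlyVarying (H0 : t 0 = 0) : SlowlyVaryingOn (Fmod t) := by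
  intro a ha
  rw [Metric.tendsto_nhds]
  intro ε hε
  set M : ℝ := max (max a a⁻¹) (3/ε) with hM
  set m₀ : ℕ := ⌈M⌉₊ + 2 with hm₀
  have hm₀M : M ≤ (m₀ : ℝ) := by
    have := Nat.le_ceil M
    push_cast [hm₀]
    linarith
  have hm₀2 : 2 ≤ m₀ := by omega
  have ha_le : a ≤ (m₀ : ℝ) := le_trans (le_trans (le_max_left _ _) (le_max_left _ _)) hm₀M
  have hainv_le : a⁻¹ ≤ (m₀ : ℝ) :=
    le_trans (le_trans (le_max_right _ _) (le_max_left _ _)) hm₀M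
  have heps : 3 / ε < (m₀ : ℝ) := by
    have h1 : 3 / ε ≤ M := le_max_right _ _
    have h2 : M ≤ ⌈M⌉₊ := Nat.le_ceil M
    have : ((⌈M⌉₊ : ℝ)) < m₀ := by push_cast [hm₀]; linarith
    linarith
  have hm₀pos : (0:ℝ) < m₀ := by exact_mod_cast (by omega : 0 < m₀)
  filter_upwards [eventually_ge_atTop ((t m₀ : ℝ))] with x hxt
  have hx0 : (0:ℝ) ≤ x := le_trans (Nat.cast_nonneg _) hxt
  obtain ⟨m, hm1, hm2⟩ := exists_index H1 H0 hx0
  have hm0m : m₀ ≤ m := by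
    by_contra hc
    have h1 : m + 1 ≤ m₀ := by omega
    have h2 : (t (m+1) : ℝ) ≤ t m₀ := by
      exact_mod_cast (t_strictMono H1).monotone h1
    linarith
  obtain ⟨p, rfl⟩ : ∃ p, m = p + 1 := ⟨m - 1, by omega⟩
  have hppos : 1 ≤ p := by omega
  -- bounds for Fmod t x
  have hFx_lb : ((p:ℝ)+1) ≤ Fmod t x := by
    have h := Fmod_mono H1 hm1
    rw [Fmod_t H1 (p+1)] at h
    push_cast at h
    linarith
  have hFx_ub : Fmod t x ≤ (p:ℝ)+2 := by
    have h := Fmod_mono H1 hm2.le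
    rw [Fmod_t H1 (p+2)] at h
    push_cast at h
    linarith
  -- bounds for a * x
  have hm₀p : (m₀ : ℝ) ≤ (p:ℝ) + 1 := by exact_mod_cast hm0m
  have hax_ub : a * x ≤ (t (p+3) : ℝ) := by
    have h1 : a * x ≤ ((p:ℝ)+1) * x :=
      mul_le_mul_of_nonneg_right (le_trans ha_le hm₀p) hx0
    have h2 : ((p:ℝ)+1) * x ≤ ((p:ℝ)+1) * (t (p+2) : ℝ) :=
      mul_le_mul_of_nonneg_left hm2.le (by positivity)
    have h3 : ((p+4) * t (p+2) + 1 : ℕ) ≤ t (p+3) := H1 (p+2)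
    have h3' : ((p:ℝ)+4) * (t (p+2) : ℝ) + 1 ≤ (t (p+3) : ℝ) := by exact_mod_cast h3
    have h4 : (0:ℝ) ≤ (t (p+2) : ℝ) := Nat.cast_nonneg _
    nlinarith
  have hax_lb : (t p : ℝ) ≤ a * x := by
    have hp1pos : (0:ℝ) < (p:ℝ) + 1 := by positivity
    have hainv : a⁻¹ ≤ (p:ℝ) + 1 := le_trans hainv_le hm₀p
    have ha' : 1 / ((p:ℝ)+1) ≤ a := by
      rw [div_le_iff₀ hp1pos]
      have := mul_le_mul_of_nonneg_left hainv (le_of_lt ha)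
      rw [mul_inv_cancel₀ (ne_of_gt ha)] at this
      linarith
    have h1 : (1 / ((p:ℝ)+1)) * x ≤ a * x := mul_le_mul_of_nonneg_right ha' hx0
    have h2 : ((p+2) * t p + 1 : ℕ) ≤ t (p+1) := H1 p
    have h2' : ((p:ℝ)+2) * (t p : ℝ) + 1 ≤ (t (p+1) : ℝ) := by exact_mod_cast h2
    have h3 : ((p:ℝ)+1) * (t p : ℝ) ≤ x := by
      have h4 : (0:ℝ) ≤ (t p : ℝ) := Nat.cast_nonneg _
      nlinarith
    have h5 : (1/((p:ℝ)+1)) * (((p:ℝ)+1) * (t p:ℝ)) ≤ (1/((p:ℝ)+1)) * x :=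
      mul_le_mul_of_nonneg_left h3 (by positivity)
    have h6 : (1/((p:ℝ)+1)) * (((p:ℝ)+1) * (t p:ℝ)) = (t p : ℝ) := by
      field_simp
    linarith
  have hFax_lb : (p:ℝ) ≤ Fmod t (a * x) := by
    have h := Fmod_mono H1 hax_lb
    rw [Fmod_t H1 p] at h
    linarith
  have hFax_ub : Fmod t (a * x) ≤ (p:ℝ)+3 := by
    have h := Fmod_mono H1 hax_ub
    rw [Fmod_t H1 (p+3)] at h
    push_cast at h
    linarith
  have hFxpos : 0 < Fmod t x := by linarith [hFx_lb]
  have e : Fmod t (a * x) / Fmod t x - 1 = (Fmod t (a * x) - Fmod t x) / Fmod t x := by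
    field_simp
  rw [Real.dist_eq, e, abs_div, abs_of_pos hFxpos]
  have hnum : |Fmod t (a * x) - Fmod t x| ≤ 3 := by
    rw [abs_le]
    constructor <;> linarith
  have hchain : |Fmod t (a * x) - Fmod t x| / Fmod t x ≤ 3 / (m₀ : ℝ) := by
    calc |Fmod t (a * x) - Fmod t x| / Fmod t x ≤ 3 / Fmod t x := by gcongr
      _ ≤ 3 / (m₀ : ℝ) := by
          gcongr
          linarith
  have hfin : 3 / (m₀ : ℝ) < ε := by
    rw [div_lt_iff₀ hm₀pos]
    rw [div_lt_iff₀ hε] at heps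
    linarith
  linarith

end
end ModConstruction

section DensityFail

variable {t : ℕ → ℕ} (H1 : ∀ m, (m+2) * t m + 1 ≤ t (m+1))
include H1

lemma Fmod_not_density (H0 : t 0 = 0) (K : Set ℕ)
    (hcnt : ∀ m, t m ≤ countLe K (t (m+1))) : ¬ HasFDensity (Fmod t) K 0 := by
  intro h
  obtain ⟨n₀, hn₀⟩ := eventually_atTop.mp (h.eventually_lt_const (by norm_num : (0:ℝ) < 1/2))
  set m := max n₀ 1 with hm
  have hm1 : 1 ≤ m := le_max_right _ _
  have hge : n₀ ≤ t (m+1) := by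
    have h1 : m + 1 ≤ t (m+1) := t_ge H1 (m+1)
    have h2 : n₀ ≤ m := le_max_left _ _
    omega
  have hlt := hn₀ (t (m+1)) hge
  have hFn : Fmod t ((t (m+1) : ℕ) : ℝ) = ((m+1 : ℕ) : ℝ) := Fmod_t H1 (m+1)
  have hFc : ((m : ℕ) : ℝ) ≤ Fmod t ((countLe K (t (m+1)) : ℕ) : ℝ) := by
    rw [← Fmod_t H1 m]
    exact Fmod_mono H1 (by exact_mod_cast hcnt m)
  rw [hFn] at hlt
  have hmpos : (0:ℝ) < ((m+1 : ℕ) : ℝ) := by positivity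
  have hratio : ((m:ℕ):ℝ) / ((m+1:ℕ):ℝ) ≤
      Fmod t ((countLe K (t (m+1)) : ℕ) : ℝ) / ((m+1:ℕ):ℝ) := by gcongr
  have hhalf : (1:ℝ)/2 ≤ ((m:ℕ):ℝ) / ((m+1:ℕ):ℝ) := by
    rw [div_le_div_iff₀ (by norm_num) hmpos]
    have : (1:ℝ) ≤ (m:ℕ) := by exact_mod_cast hm1
    push_cast
    push_cast at this
    linarith
  linarith

end DensityFail

/-- the breakpoint sequence -/
def tseq (N : ℕ → ℕ) : ℕ → ℕ
  | 0 => 0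
  | m+1 => max (N (tseq N m)) ((m+2) * tseq N m) + 1

lemma tseq_H1 (N : ℕ → ℕ) : ∀ m, (m+2) * tseq N m + 1 ≤ tseq N (m+1) := by
  intro m
  show _ ≤ max (N (tseq N m)) ((m+2) * tseq N m) + 1
  omega

lemma exists_bad_modulus {K : Set ℕ} (hK : K.Infinite) :
    ∃ f : ℝ → ℝ, IsModulus f ∧ IsUnboundedOn f ∧ ConcaveOn ℝ (Set.Ici 0) f ∧
      SlowlyVaryingOn f ∧ ¬ HasFDensity f K 0 := by
  choose N hN using fun n => exists_countLe_ge hK n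
  set t := tseq N with ht
  have H1 := tseq_H1 N
  have H0 : t 0 = 0 := rfl
  refine ⟨Fmod t, Fmod_isModulus H1 H0, Fmod_unbounded H1, Fmod_concave H1,
    Fmod_slowlyVarying H1 H0, Fmod_not_density H1 H0 K ?_⟩
  intro m
  have h1 : N (t m) ≤ t (m+1) := by
    show N (t m) ≤ max (N (tseq N m)) ((m+2) * tseq N m) + 1
    rw [ht]
    omega
  exact le_trans (hN (t m)) (countLe_mono K h1)

lemma lemmaA {X : Type*} [MetricSpace X] {Aseq : ℕ → Set X} {A : Set X}
    (h : WijsmanConvTo Aseq A) {f : ℝ → ℝ} (hf : IsModulus f) (hu : IsUnboundedOn f) :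
    FWijsmanStatConvTo f Aseq A := by
  intro x ε hε
  have : ∀ᶠ k in atTop, |infDist x (Aseq k) - infDist x A| < ε := by
    have := (h x).sub_const (infDist x A)
    simpa using (this.abs.eventually_lt_const (by simpa using hε))
  obtain ⟨N, hN⟩ := eventually_atTop.mp this
  exact hasFDensity_zero_of_finite hf hu (K := {k : ℕ | ε ≤ |infDist x (Aseq k) - infDist x A|})
    (N := N) (fun k hk => by
      by_contra hlt
      exact absurd (hN k (not_lt.mp hlt)) (not_lt.mpr hk))


lemma lemmaB {X : Type*} [MetricSpace X] {Aseq : ℕ → Set X} {A : Set X}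
    (h : ∀ f : ℝ → ℝ, IsModulus f → IsUnboundedOn f → ConcaveOn ℝ (Set.Ici 0) f →
      SlowlyVaryingOn f → FWijsmanStatConvTo f Aseq A) : WijsmanConvTo Aseq A := by
  intro x
  rw [Metric.tendsto_atTop]
  intro ε hε
  by_contra hc
  push_neg at hc
  set K := {k : ℕ | ε ≤ |infDist x (Aseq k) - infDist x A|} with hKdef
  have hKinf : K.Infinite := by
    apply Set.infinite_of_forall_exists_gt
    intro a
    obtain ⟨n, hn1, hn2⟩ := hc (a+1)
    rw [Real.dist_eq] at hn2
    exact ⟨n, hn2, by omega⟩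
  obtain ⟨f, hf, hu, hcon, hsv, hnd⟩ := exists_bad_modulus hKinf
  exact hnd (h f hf hu hcon hsv x ε hε)

/-- `(A_k)` is Wijsman convergent to `A` iff `[WS^f]-lim A_k = A`
for every unbounded modulus `f`, iff `[WS^f]-lim A_k = A` for every unbounded,
concave, slowly varying modulus `f`. -/
theorem stmt4 {X : Type*} [MetricSpace X]
    (A : Set X) (hA : A.Nonempty) (hAcl : IsClosed A)
    (Aseq : ℕ → Set X) (hAseq : ∀ k, (Aseq k).Nonempty ∧ IsClosed (Aseq k)) :
    (WijsmanConvTo Aseq A ↔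
      (∀ f : ℝ → ℝ, IsModulus f → IsUnboundedOn f → FWijsmanStatConvTo f Aseq A)) ∧
    (WijsmanConvTo Aseq A ↔
      (∀ f : ℝ → ℝ, IsModulus f → IsUnboundedOn f → ConcaveOn ℝ (Set.Ici 0) f →
        SlowlyVaryingOn f → FWijsmanStatConvTo f Aseq A)) := by
  have hB : (∀ f : ℝ → ℝ, IsModulus f → IsUnboundedOn f → ConcaveOn ℝ (Set.Ici 0) f →
      SlowlyVaryingOn f → FWijsmanStatConvTo f Aseq A) → WijsmanConvTo Aseq A := lemmaB
  constructor
  · constructor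
    · intro hw f hf hu
      exact lemmaA hw hf hu
    · intro h
      exact hB (fun f hf hu _ _ => h f hf hu)
  · constructor
    · intro hw f hf hu _ _
      exact lemmaA hw hf hu
    · exact hB
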